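/- Let e_0, e_1 ∈ ℂ^d with p = ‖e_0‖², q = ‖e_1‖², c = |⟨e_0, e_1⟩|², and suppose p + q > 0. Let σ̃ = (|e_0⟩⟨e_0| + |e_1⟩⟨e_1|)/(p + q). Then the von Neumann entropy of σ̃ equals h(λ̃_+), where λ̃_+ = ½ + √((p − q)² + 4c) / (2(p + q)). -/

import Mathlib

set_option maxHeartbeats 1000000

open scoped InnerProductSpace

/-- The outer product `|x⟩⟨x|` of a vector `x ∈ ℂ^d`: the `d×d` matrix with `(i,j)` entry
`x i * conj (x j)`. -/
noncomputable def outer {d : ℕ} (x : EuclideanSpace ℂ (Fin d)) : Matrix (Fin d) (Fin d) ℂ :=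
  Matrix.of fun i j => x i * (starRingEnd ℂ) (x j)

-- Von Neumann entropy (base 2) of a Hermitian complex matrix, via its eigenvalues
-- counted with multiplicity (and `0` for non-Hermitian matrices).
open scoped Classical in
noncomputable def vnEntropy {k : Type*} [Fintype k] [DecidableEq k] (ρ : Matrix k k ℂ) : ℝ :=
  if h : ρ.IsHermitian then ∑ i, -(h.eigenvalues i * Real.logb 2 (h.eigenvalues i)) else 0

/-- The binary entropy function `h(p) = -p log₂ p - (1-p) log₂ (1-p)`. -/
noncomputable def binH (p : ℝ) : ℝ := -(p * Real.logb 2 p) - (1 - p) * Real.logb 2 (1 - p)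

open Matrix in
lemma det_tsmul_sub_aux {n : Type*} [Fintype n] [DecidableEq n] {A : Matrix n n ℂ}
    (hA : A.IsHermitian) (t : ℝ) :
    ((t:ℂ) • (1 : Matrix n n ℂ) - A).det = ∏ i, ((t:ℂ) - hA.eigenvalues i) := by
  set U : Matrix n n ℂ := (hA.eigenvectorUnitary : Matrix n n ℂ) with hUdef
  have hUU : U * star U = 1 := Matrix.mem_unitaryGroup_iff.mp hA.eigenvectorUnitary.2
  have hUU2 : star U * U = 1 := Matrix.mem_unitaryGroup_iff'.mp hA.eigenvectorUnitary.2
  have key : (t:ℂ) • (1 : Matrix n n ℂ) - A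
      = U * ((t:ℂ) • 1 - diagonal (RCLike.ofReal ∘ hA.eigenvalues)) * star U := by
    rw [Matrix.mul_sub, Matrix.sub_mul, Matrix.mul_smul, Matrix.smul_mul, mul_one, hUU]
    conv_lhs => rw [hA.spectral_theorem]
    rw [Unitary.conjStarAlgAut_apply]
  rw [key, det_mul, det_mul, mul_comm, ← mul_assoc, ← det_mul, hUU2, det_one, one_mul]
  rw [smul_one_eq_diagonal, diagonal_sub, det_diagonal]
  rfl

open Matrix in
lemma det_outer_form_aux (m : ℕ) (e₀ e₁ : EuclideanSpace ℂ (Fin (m+1))) (s : ℝ)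
    (hs : (s:ℂ) ≠ 0) (t : ℂ) (ht : t ≠ 0) :
    t * (t • (1 : Matrix (Fin (m+1)) (Fin (m+1)) ℂ) - ((s⁻¹ : ℝ) : ℂ) • (outer e₀ + outer e₁)).det
      = t ^ (m + 2) - ((⟪e₀, e₀⟫_ℂ + ⟪e₁, e₁⟫_ℂ) / s) * t ^ (m + 1)
        + ((⟪e₀, e₀⟫_ℂ * ⟪e₁, e₁⟫_ℂ - ⟪e₀, e₁⟫_ℂ * ⟪e₁, e₀⟫_ℂ) / s ^ 2) * t ^ m := by
  set M : Matrix (Fin (m+1)) (Fin 2) ℂ := Matrix.of fun i k => ![e₀ i, e₁ i] k with hM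
  set N : Matrix (Fin 2) (Fin (m+1)) ℂ := (-(t * s)⁻¹) • Mᴴ with hN
  have key : t • (1 : Matrix (Fin (m+1)) (Fin (m+1)) ℂ) - ((s⁻¹ : ℝ) : ℂ) • (outer e₀ + outer e₁)
      = t • (1 + M * N) := by
    have hMM : M * Mᴴ = outer e₀ + outer e₁ := by
      ext i j
      simp [hM, Matrix.mul_apply, Fin.sum_univ_two, outer]
    rw [hN, Matrix.mul_smul, hMM]
    push_cast
    match_scalars <;> field_simp
  rw [key, det_smul, det_one_add_mul_comm]
  have h2 : (1 + N * M).det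
      = (1 + (-(t * s)⁻¹) * ⟪e₀, e₀⟫_ℂ) * (1 + (-(t * s)⁻¹) * ⟪e₁, e₁⟫_ℂ)
        - ((-(t * s)⁻¹) * ⟪e₀, e₁⟫_ℂ) * ((-(t * s)⁻¹) * ⟪e₁, e₀⟫_ℂ) := by
    rw [det_fin_two]
    simp [hN, hM, Matrix.mul_apply, Matrix.one_apply, Fin.sum_univ_succ, PiLp.inner_apply,
      RCLike.inner_apply, mul_comm, -inner_self_eq_norm_sq_to_K]
  rw [h2]
  simp only [Fintype.card_fin]
  generalize ⟪e₀, e₀⟫_ℂ = a at *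
  generalize ⟪e₁, e₁⟫_ℂ = b at *
  generalize ⟪e₀, e₁⟫_ℂ = c₀ at *
  generalize ⟪e₁, e₀⟫_ℂ = c₁ at *
  field_simp
  ring

theorem stmt5 (d : ℕ) (e₀ e₁ : EuclideanSpace ℂ (Fin d))
    (p q c : ℝ) (hp : p = ‖e₀‖ ^ 2) (hq : q = ‖e₁‖ ^ 2)
    (hc : c = ‖⟪e₀, e₁⟫_ℂ‖ ^ 2)
    (hpq : 0 < p + q) :
    vnEntropy ((((p + q)⁻¹ : ℝ) : ℂ) • (outer e₀ + outer e₁)) =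
      binH (1 / 2 + Real.sqrt ((p - q) ^ 2 + 4 * c) / (2 * (p + q))) := by
  -- d = 0 is impossible
  obtain _ | m := d
  · exfalso
    have h0 : e₀ = 0 := by ext i; exact i.elim0
    have h1 : e₁ = 0 := by ext i; exact i.elim0
    rw [hp, hq, h0, h1] at hpq
    simp at hpq
  set s : ℝ := p + q with hs
  have hs0 : s ≠ 0 := ne_of_gt hpq
  have hc0 : 0 ≤ c := hc ▸ sq_nonneg _
  set r : ℝ := Real.sqrt ((p - q) ^ 2 + 4 * c) with hr
  have hr2 : r ^ 2 = (p - q) ^ 2 + 4 * c :=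
    Real.sq_sqrt (by positivity)
  set lp : ℝ := 1 / 2 + r / (2 * s) with hlp
  set lm : ℝ := 1 / 2 - r / (2 * s) with hlm
  have hsum : lp + lm = 1 := by rw [hlp, hlm]; ring
  have hprod : lp * lm = (p * q - c) / s ^ 2 := by
    rw [hlp, hlm]
    have : (1 / 2 + r / (2 * s)) * (1 / 2 - r / (2 * s)) = 1 / 4 - r ^ 2 / (4 * s ^ 2) := by
      field_simp; ring
    rw [this, hr2, hs]
    have hpq0 : p + q ≠ 0 := hs0
    field_simp
    ring
  -- Hermitian
  have hH : ((((p + q)⁻¹ : ℝ) : ℂ) • (outer e₀ + outer e₁)).IsHermitian := by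
    unfold Matrix.IsHermitian
    ext i j
    simp [Matrix.conjTranspose_apply, outer, Complex.conj_ofReal, mul_comm, mul_add]
  set μ : Fin (m + 1) → ℝ := hH.eigenvalues with hμ
  -- inner product values
  have hip0 : ⟪e₀, e₀⟫_ℂ = (p : ℂ) := by rw [inner_self_eq_norm_sq_to_K, hp]; push_cast; rfl
  have hip1 : ⟪e₁, e₁⟫_ℂ = (q : ℂ) := by rw [inner_self_eq_norm_sq_to_K, hq]; push_cast; rfl
  have hipc : ⟪e₀, e₁⟫_ℂ * ⟪e₁, e₀⟫_ℂ = (c : ℂ) := by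
    rw [← inner_conj_symm e₁ e₀, Complex.mul_conj, hc]
    push_cast [Complex.sq_norm]
    rfl
  clear_value r lp lm
  -- the key polynomial identity
  have keyEval : ∀ t : ℝ, t ≠ 0 →
      t * ∏ i, (t - μ i) = t ^ m * ((t - lp) * (t - lm)) := by
    intro t ht
    have htC : (t : ℂ) ≠ 0 := by exact_mod_cast ht
    apply Complex.ofReal_injective
    push_cast
    calc (t : ℂ) * ∏ i, ((t:ℂ) - (μ i : ℂ))
        = (t:ℂ) * ((t:ℂ) • (1 : Matrix (Fin (m+1)) (Fin (m+1)) ℂ)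
            - ((s⁻¹ : ℝ) : ℂ) • (outer e₀ + outer e₁)).det := by
          rw [det_tsmul_sub_aux hH t]
      _ = (t:ℂ) ^ (m + 2) - ((⟪e₀, e₀⟫_ℂ + ⟪e₁, e₁⟫_ℂ) / s) * (t:ℂ) ^ (m + 1)
            + ((⟪e₀, e₀⟫_ℂ * ⟪e₁, e₁⟫_ℂ - ⟪e₀, e₁⟫_ℂ * ⟪e₁, e₀⟫_ℂ) / (s:ℂ) ^ 2) * (t:ℂ) ^ m := by
          exact det_outer_form_aux m e₀ e₁ s (by exact_mod_cast hs0) t htC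
      _ = (t:ℂ) ^ m * (((t:ℂ) - lp) * ((t:ℂ) - lm)) := by
          rw [hip0, hip1, hipc]
          have hsC : (s : ℂ) ≠ 0 := by exact_mod_cast hs0
          have h1 : ((p : ℂ) + q) / s = 1 := by
            have hps : ((p : ℂ) + q) = (s : ℂ) := by rw [hs]; push_cast; ring
            rw [hps, div_self hsC]
          have h2 : ((p:ℂ) * q - c) / (s:ℂ) ^ 2 = (lp : ℂ) * lm := by
            have h := congrArg (Complex.ofReal) hprod
            push_cast at h
            exact h.symm
          have h3 : (lp : ℂ) + lm = 1 := by
            have h := congrArg (Complex.ofReal) hsum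
            push_cast at h
            exact h
          rw [h1, h2]
          linear_combination ((t:ℂ) ^ (m+1)) * h3
  -- multiset of eigenvalues
  have hmult : ((0:ℝ) ::ₘ Finset.univ.val.map μ) = Multiset.replicate m 0 + {lp, lm} := by
    have hPQ : ((((0:ℝ) ::ₘ Finset.univ.val.map μ)).map
          (fun a => Polynomial.X - Polynomial.C a)).prod
        = ((Multiset.replicate m (0:ℝ) + {lp, lm}).map
          (fun a => Polynomial.X - Polynomial.C a)).prod := by
      apply Polynomial.eq_of_infinite_eval_eq
      apply Set.Infinite.mono (s := {(0:ℝ)}ᶜ)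
      · intro t ht
        have ht0 : t ≠ 0 := ht
        have hk := keyEval t ht0
        simp only [Set.mem_setOf_eq, Multiset.insert_eq_cons, Multiset.map_cons,
          Multiset.map_add, Multiset.prod_cons, Multiset.prod_add, Multiset.map_replicate,
          Multiset.prod_replicate, Multiset.map_singleton, Multiset.prod_singleton,
          Polynomial.eval_mul, Polynomial.eval_pow, Polynomial.eval_multiset_prod,
          Polynomial.eval_sub, Polynomial.eval_X, Polynomial.eval_C, Multiset.map_map,
          Function.comp_def, sub_zero]
        rw [Finset.prod_eq_multiset_prod] at hk
        exact hk
      · exact Set.Finite.infinite_compl (Set.finite_singleton 0)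
    have := congrArg Polynomial.roots hPQ
    rwa [Polynomial.roots_multiset_prod_X_sub_C, Polynomial.roots_multiset_prod_X_sub_C] at this
  -- entropy computation
  set f : ℝ → ℝ := fun x => -(x * Real.logb 2 x) with hf
  have hf0 : f 0 = 0 := by simp [hf]
  have hsum_eq : ∑ i, f (μ i) = f lp + f lm := by
    have h1 : ∑ i, f (μ i) = ((Finset.univ.val.map μ).map f).sum := by
      rw [Multiset.map_map]; rfl
    have h2 : (((0:ℝ) ::ₘ Finset.univ.val.map μ).map f).sum
        = ((Multiset.replicate m 0 + ({lp, lm} : Multiset ℝ)).map f).sum := by rw [hmult]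
    rw [Multiset.map_cons, Multiset.sum_cons, hf0, zero_add] at h2
    rw [Multiset.map_add, Multiset.sum_add, Multiset.map_replicate, Multiset.sum_replicate,
      hf0, smul_zero, zero_add] at h2
    rw [h1, h2]
    simp
  rw [vnEntropy, dif_pos hH]
  have : ∑ i, -(hH.eigenvalues i * Real.logb 2 (hH.eigenvalues i)) = ∑ i, f (μ i) := rfl
  rw [this, hsum_eq]
  have hlm1 : lm = 1 - lp := by rw [← hsum]; ring
  rw [binH, hf]
  simp only [hlm1]
  ring
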